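/- Let Y be a real random variable with G(t) = P(Y ≥ t) and law μ. If Y is not almost surely constant, then ∫ G(t)(1 - G(t)) dμ(t) > 0. -/

import Mathlib

open MeasureTheory

/-- If `Y` (with law `μ` and `G t = P(Y ≥ t)`) is not almost surely constant,
then `∫ G(t)(1-G(t)) dμ(t) > 0`. -/
theorem stmt_7 (μ : Measure ℝ) [IsProbabilityMeasure μ]
    (G : ℝ → ℝ) (hG : ∀ t, G t = (μ (Set.Ici t)).toReal)
    (hY : ¬ ∃ c : ℝ, μ {c} = 1) :
    0 < ∫ t, G t * (1 - G t) ∂μ := by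
  have hne : ∀ t : ℝ, μ (Set.Ici t) ≠ ⊤ := fun t => measure_ne_top μ _
  have hAnti : Antitone G := fun s t hst => by
    rw [hG, hG]
    exact ENNReal.toReal_mono (hne s) (measure_mono (Set.Ici_subset_Ici.2 hst))
  have hGm : Measurable G := hAnti.measurable
  have hG0 : ∀ t, 0 ≤ G t := fun t => by rw [hG]; exact ENNReal.toReal_nonneg
  have hG1 : ∀ t, G t ≤ 1 := fun t => by
    rw [hG]
    have h1 : μ (Set.Ici t) ≤ 1 := prob_le_one
    calc (μ (Set.Ici t)).toReal ≤ (1 : ENNReal).toReal :=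
          ENNReal.toReal_mono (by simp) h1
      _ = 1 := by simp
  have hnn : ∀ t, 0 ≤ G t * (1 - G t) := fun t =>
    mul_nonneg (hG0 t) (sub_nonneg.2 (hG1 t))
  have hfm : Measurable fun t => G t * (1 - G t) := hGm.mul (measurable_const.sub hGm)
  have hfint : Integrable (fun t => G t * (1 - G t)) μ := by
    refine (integrable_const (1 : ℝ)).mono' hfm.aestronglyMeasurable ?_
    filter_upwards with t
    rw [Real.norm_eq_abs, abs_of_nonneg (hnn t)]
    nlinarith [hG0 t, hG1 t]
  by_contra hpos
  push_neg at hpos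
  have hzero : ∫ t, G t * (1 - G t) ∂μ = 0 :=
    le_antisymm hpos (integral_nonneg hnn)
  have hae0 : ∀ᵐ t ∂μ, G t * (1 - G t) = 0 :=
    (integral_eq_zero_iff_of_nonneg hnn hfint).1 hzero
  set A : Set ℝ := {t | μ (Set.Ici t) = 1} with hAdef
  set B : Set ℝ := {t | μ (Set.Ici t) = 0} with hBdef
  have hae : ∀ᵐ t ∂μ, t ∈ A ∨ t ∈ B := by
    filter_upwards [hae0] with t ht
    rcases mul_eq_zero.1 ht with h | h
    · right
      rw [hG] at h
      show μ (Set.Ici t) = 0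
      simpa [ENNReal.toReal_eq_zero_iff, hne t] using h
    · left
      have h' : G t = 1 := by linarith
      rw [hG] at h'
      show μ (Set.Ici t) = 1
      have := (ENNReal.toReal_eq_toReal_iff' (hne t) (by simp : (1 : ENNReal) ≠ ⊤)).1
        (by simpa using h')
      simpa using this
  -- B is up-closed
  have hBup : ∀ s t : ℝ, s ∈ B → s ≤ t → t ∈ B := by
    intro s t hs hst
    have hmono : μ (Set.Ici t) ≤ μ (Set.Ici s) :=
      measure_mono (Set.Ici_subset_Ici.2 hst)
    have hs' : μ (Set.Ici s) = 0 := hs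
    show μ (Set.Ici t) = 0
    exact le_antisymm (hs' ▸ hmono) zero_le
  -- A is down-closed
  have hAdown : ∀ s t : ℝ, t ∈ A → s ≤ t → s ∈ A := by
    intro s t ht hst
    have hmono : μ (Set.Ici t) ≤ μ (Set.Ici s) :=
      measure_mono (Set.Ici_subset_Ici.2 hst)
    have ht' : μ (Set.Ici t) = 1 := ht
    show μ (Set.Ici s) = 1
    exact le_antisymm prob_le_one (ht' ▸ hmono)
  -- for t ∈ A, the strict left part is null
  have hIio1 : ∀ t : ℝ, t ∈ A → μ (Set.Iio t) = 0 := by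
    intro t ht
    have hc := measure_compl (measurableSet_Ici (a := t)) (hne t)
    rw [Set.compl_Ici] at hc
    have ht' : μ (Set.Ici t) = 1 := ht
    rw [hc, ht', measure_univ]
    simp
  -- B is null
  have hBnull : μ B = 0 := by
    by_cases hmin : ∃ m ∈ B, ∀ t ∈ B, m ≤ t
    · obtain ⟨m, hm, hmle⟩ := hmin
      have hsub : B ⊆ Set.Ici m := fun t ht => hmle t ht
      exact measure_mono_null hsub hm
    · push_neg at hmin
      have hcov : B ⊆ ⋃ q : ℚ, (if (q : ℝ) ∈ B then Set.Ici (q : ℝ) else ∅) := by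
        intro x hx
        obtain ⟨t, ht, htx⟩ := hmin x hx
        obtain ⟨q, hq1, hq2⟩ := exists_rat_btwn htx
        have hqB : (q : ℝ) ∈ B := hBup t q ht hq1.le
        exact Set.mem_iUnion.2 ⟨q, by rw [if_pos hqB]; exact hq2.le⟩
      refine measure_mono_null hcov (measure_iUnion_null fun q => ?_)
      by_cases h : (q : ℝ) ∈ B
      · rw [if_pos h]; exact h
      · rw [if_neg h]; simp
  -- complement of A is null
  have hAcnull : μ Aᶜ = 0 := by
    have hsub : Aᶜ ⊆ {t : ℝ | ¬ (t ∈ A ∨ t ∈ B)} ∪ B := by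
      intro x hx
      by_cases hb : x ∈ B
      · exact Or.inr hb
      · exact Or.inl fun h => h.elim hx hb
    have h1 : μ {t : ℝ | ¬ (t ∈ A ∨ t ∈ B)} = 0 := ae_iff.1 hae
    have := le_trans (measure_mono hsub)
      (measure_union_le (μ := μ) {t : ℝ | ¬ (t ∈ A ∨ t ∈ B)} B)
    rw [h1, hBnull] at this
    simpa using le_antisymm (by simpa using this) zero_le
  have hAne : A.Nonempty := by
    rcases Set.eq_empty_or_nonempty A with h | h
    · exfalso
      rw [h, Set.compl_empty] at hAcnull
      simp [measure_univ] at hAcnull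
    · exact h
  have hAbdd : BddAbove A := by
    by_contra hbd
    have hIio : ∀ n : ℕ, μ (Set.Iio (n : ℝ)) = 0 := by
      intro n
      obtain ⟨t, ht, hnt⟩ := not_bddAbove_iff.1 hbd (n : ℝ)
      exact measure_mono_null (Set.Iio_subset_Iio hnt.le) (hIio1 t ht)
    have huniv : μ Set.univ = 0 := by
      have hcov : Set.univ ⊆ ⋃ n : ℕ, Set.Iio (n : ℝ) := fun x _ => by
        obtain ⟨n, hn⟩ := exists_nat_gt x
        exact Set.mem_iUnion.2 ⟨n, hn⟩
      exact measure_mono_null hcov (measure_iUnion_null hIio)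
    simp [measure_univ] at huniv
  set c := sSup A with hc
  have hIioc : μ (Set.Iio c) = 0 := by
    have hcov : Set.Iio c ⊆ ⋃ q : ℚ, (if (q : ℝ) ∈ A then Set.Iio (q : ℝ) else ∅) := by
      intro x hx
      obtain ⟨t, ht, hxt⟩ := exists_lt_of_lt_csSup hAne hx
      obtain ⟨q, hq1, hq2⟩ := exists_rat_btwn hxt
      have hqA : (q : ℝ) ∈ A := hAdown q t ht hq2.le
      exact Set.mem_iUnion.2 ⟨q, by rw [if_pos hqA]; exact hq1⟩
    refine measure_mono_null hcov (measure_iUnion_null fun q => ?_)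
    by_cases h : (q : ℝ) ∈ A
    · rw [if_pos h]; exact hIio1 _ h
    · rw [if_neg h]; simp
  have hIoic : μ (Set.Ioi c) = 0 := by
    refine measure_mono_null ?_ hAcnull
    intro x hx hxA
    exact absurd (le_csSup hAbdd hxA) (not_le.2 hx)
  refine hY ⟨c, ?_⟩
  have h := measure_union_le (μ := μ) (Set.Iio c) (Set.Ioi c)
  rw [hIioc, hIoic] at h
  simpa using h
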